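/- Let d ≥ 3 and χ be integers with χ ≥ 1 − g(d), and let v = (a_1, …, a_d) be a balanced spectrum of type (d, χ) with a_i ≤ −2 for some i. If 2·h⁰(v) = 2 + χ + d(d−3)/2, then either χ = 1 − g(d) and a_i = 1 − i for all i, or χ = g(d) − 1 and a_i = d − 2 − i for all i. -/

import Mathlib

open Finset

/-- A spectrum of type `(d, χ)`: a nonincreasing `d`-tuple of integers with
entry sum `χ - d`. -/
def IsSpectrum (d : ℕ) (χ : ℤ) (a : Fin d → ℤ) : Prop :=
  Antitone a ∧ ∑ i, a i = χ - (d : ℤ)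

/-- Balanced: consecutive entries drop by at most 1. -/
def IsBalanced {d : ℕ} (a : Fin d → ℤ) : Prop :=
  ∀ (i : Fin d) (h : (i : ℕ) + 1 < d), a i - a ⟨(i : ℕ) + 1, h⟩ ≤ 1

/-- `h⁰` of a spectrum: `Σ_{a_i ≥ 0} (a_i + 1)`. -/
def h0 {d : ℕ} (a : Fin d → ℤ) : ℤ :=
  ∑ i, if 0 ≤ a i then a i + 1 else 0

/-- Arithmetic genus of a degree `d` plane curve: `(d-1)(d-2)/2`. -/
def gd (d : ℤ) : ℤ := (d - 1) * (d - 2) / 2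

set_option maxHeartbeats 1600000 in
/-- equality in the Clifford bound forces the spectrum
`(0, -1, …, 1-d)` with `χ = 1 - g(d)` or `(d-3, d-4, …, -2)` with `χ = g(d) - 1`. -/
theorem stmt_14 (d : ℕ) (χ : ℤ) (hd : 3 ≤ d) (hχ : 1 - gd (d : ℤ) ≤ χ)
    (a : Fin d → ℤ) (hs : IsSpectrum d χ a) (hb : IsBalanced a)
    (hneg : ∃ i, a i ≤ -2)
    (heq : 2 * h0 a = 2 + χ + (d : ℤ) * ((d : ℤ) - 3) / 2) :
    (χ = 1 - gd (d : ℤ) ∧ ∀ i : Fin d, a i = -((i : ℕ) : ℤ)) ∨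
    (χ = gd (d : ℤ) - 1 ∧ ∀ i : Fin d, a i = (d : ℤ) - 3 - ((i : ℕ) : ℤ)) := by
  obtain ⟨hanti, hsum⟩ := hs
  -- clear the divisions by 2
  have hhalf : ∀ x : ℤ, Even x → 2 * (x / 2) = x := by
    rintro x ⟨r, hr⟩
    omega
  have hW2 : 2 * ((d : ℤ) * ((d : ℤ) - 3) / 2) = (d : ℤ) * ((d : ℤ) - 3) := by
    apply hhalf
    rcases Int.even_or_odd (d : ℤ) with h | h
    · exact h.mul_right _
    · obtain ⟨r, hr⟩ := h
      have h3 : Even ((d : ℤ) - 3) := ⟨r - 1, by omega⟩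
      exact h3.mul_left _
  have hgd2 : 2 * gd (d : ℤ) = ((d : ℤ) - 1) * ((d : ℤ) - 2) := by
    apply hhalf
    rcases Int.even_or_odd (d : ℤ) with h | h
    · obtain ⟨r, hr⟩ := h
      have h3 : Even ((d : ℤ) - 2) := ⟨r - 1, by omega⟩
      exact h3.mul_left _
    · obtain ⟨r, hr⟩ := h
      have h3 : Even ((d : ℤ) - 1) := ⟨r, by omega⟩
      exact h3.mul_right _
  -- ℕ-indexed version of the spectrum
  set A : ℕ → ℤ := fun n => if h : n < d then a ⟨n, h⟩ else 0 with hAdef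
  have hAeq : ∀ i : Fin d, A (i : ℕ) = a i := by
    intro i
    simp [hAdef, i.isLt]
  have hAanti : ∀ i j : ℕ, i ≤ j → j < d → A j ≤ A i := by
    intro i j hij hj
    have h1 : A j = a ⟨j, hj⟩ := by simp [hAdef, hj]
    have h2 : A i = a ⟨i, lt_of_le_of_lt hij hj⟩ := by simp [hAdef, lt_of_le_of_lt hij hj]
    rw [h1, h2]
    exact hanti (by exact hij)
  have htele : ∀ n i : ℕ, i + n < d → A i ≤ A (i + n) + n := by
    intro n
    induction n with
    | zero => intro i h; simp
    | succ n ih =>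
      intro i h
      have h1 : i + n < d := by omega
      have h2 := ih i h1
      have h3 := hb ⟨i + n, h1⟩ (by show i + n + 1 < d; omega)
      have e1 : A (i + n) = a ⟨i + n, h1⟩ := by simp [hAdef, h1]
      have e2 : A (i + (n + 1)) = a ⟨i + n + 1, by omega⟩ := by
        have : i + (n + 1) < d := h
        simp only [hAdef]
        rw [dif_pos (show i + (n+1) < d from h)]
        rfl
      have : a (⟨i + n, h1⟩ : Fin d) - a ⟨(i : ℕ) + n + 1, by omega⟩ ≤ 1 := by
        convert h3 using 3
      push_cast
      rw [e2]
      rw [e1] at h2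
      linarith
  -- the last entry is ≤ -2
  obtain ⟨i0, hi0⟩ := hneg
  have hdpos : 0 < d := by omega
  have hlast : A (d - 1) ≤ -2 := by
    have h1 : A (d - 1) = a ⟨d - 1, by omega⟩ := by simp [hAdef, show d - 1 < d by omega]
    rw [h1]
    calc a ⟨d - 1, by omega⟩ ≤ a i0 := hanti (by
          have := i0.isLt
          rw [Fin.le_def]
          simp only []
          omega)
      _ ≤ -2 := hi0
  -- k = first index with negative entry
  have hex : ∃ n, A n < 0 := ⟨d - 1, by omega⟩
  set k : ℕ := Nat.find hex with hkdef
  have hk_neg : A k < 0 := Nat.find_spec hex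
  have hk_min : ∀ m, m < k → 0 ≤ A m := fun m hm => not_lt.mp (Nat.find_min hex hm)
  have hkd2 : k ≤ d - 2 := by
    apply Nat.find_le
    have h1 : (d - 2) + 1 < d := by omega
    have := htele 1 (d - 2) h1
    have e : d - 2 + 1 = d - 1 := by omega
    rw [e] at this
    push_cast at this
    omega
  -- h0 and sums as range-sums
  have hsum' : ∑ i ∈ range d, A i = χ - d := by
    rw [← Fin.sum_univ_eq_sum_range A d, ← hsum]
    exact Finset.sum_congr rfl fun i _ => hAeq i
  have hh0' : h0 a = ∑ i ∈ range d, (if 0 ≤ A i then A i + 1 else 0) := by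
    rw [h0, ← Fin.sum_univ_eq_sum_range (fun n => if 0 ≤ A n then A n + 1 else 0) d]
    exact Finset.sum_congr rfl fun i _ => by rw [hAeq i]
  -- k ≥ 1
  have hk1 : 1 ≤ k := by
    by_contra hcon
    have hk0 : k = 0 := by omega
    have hz : h0 a = 0 := by
      rw [hh0']
      apply Finset.sum_eq_zero
      intro i hi
      simp only [mem_range] at hi
      have : A i < 0 := lt_of_le_of_lt (hAanti k i (by omega) hi) hk_neg
      rw [if_neg (by omega)]
    rw [hz] at heq
    have hring : ((d : ℤ) - 1) * ((d : ℤ) - 2) = (d : ℤ) * ((d : ℤ) - 3) + 2 := by ring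
    linarith
  have hkd : k < d := by omega
  -- A (k-1) = 0 and A k = -1
  have hAkm1 : A (k - 1) = 0 := by
    have h1 : 0 ≤ A (k - 1) := hk_min _ (by omega)
    have h2 := htele 1 (k - 1) (by omega)
    have e : k - 1 + 1 = k := by omega
    rw [e] at h2
    push_cast at h2
    omega
  have hAk : A k = -1 := by
    have h2 := htele 1 (k - 1) (by omega)
    have e : k - 1 + 1 = k := by omega
    rw [e] at h2
    push_cast at h2
    omega
  -- pointwise bounds
  have hub : ∀ i, i < k → A i ≤ (k : ℤ) - 1 - i := by
    intro i hi
    have h2 := htele (k - 1 - i) i (by omega)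
    have e : i + (k - 1 - i) = k - 1 := by omega
    rw [e, hAkm1] at h2
    have : ((k - 1 - i : ℕ) : ℤ) = (k : ℤ) - 1 - i := by omega
    omega
  have hlb : ∀ i, k ≤ i → i < d → (k : ℤ) - 1 - i ≤ A i := by
    intro i hki hi
    have h2 := htele (i - k) k (by omega)
    have e : k + (i - k) = i := by omega
    rw [e, hAk] at h2
    have : ((i - k : ℕ) : ℤ) = (i : ℤ) - k := by omega
    omega
  -- the slack sum T
  set T : ℤ := ∑ i ∈ range d,
      (if i < k then (1 : ℤ) else -1) * ((k : ℤ) - 1 - (i : ℤ) - A i) with hTdef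
  have hT0 : 0 ≤ T := by
    apply Finset.sum_nonneg
    intro i hi
    simp only [mem_range] at hi
    by_cases h : i < k
    · rw [if_pos h]
      have := hub i h
      linarith
    · rw [if_neg h]
      have := hlb i (by omega) hi
      linarith
  -- split sums at k
  have hsplit : ∀ f : ℕ → ℤ,
      ∑ i ∈ range d, f i = ∑ i ∈ range k, f i + ∑ i ∈ Ico k d, f i := by
    intro f
    rw [range_eq_Ico, ← Finset.sum_Ico_consecutive _ (Nat.zero_le k) (le_of_lt hkd),
      ← range_eq_Ico]
  set SP : ℤ := ∑ i ∈ range k, A i with hSPdef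
  set SN : ℤ := ∑ i ∈ Ico k d, A i with hSNdef
  set Sk : ℤ := ∑ i ∈ range k, (i : ℤ) with hSkdef
  set SI : ℤ := ∑ i ∈ Ico k d, (i : ℤ) with hSIdef
  have hsplitA : SP + SN = χ - d := by rw [hSPdef, hSNdef, ← hsplit]; exact hsum'
  have hSk2 : Sk * 2 = (k : ℤ) * ((k : ℤ) - 1) := by
    have hc := congrArg (fun n : ℕ => (n : ℤ)) (Finset.sum_range_id_mul_two k)
    push_cast [Nat.cast_sub (show 1 ≤ k from hk1)] at hc
    rw [hSkdef]
    linarith [hc]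
  have hSd2 : (Sk + SI) * 2 = (d : ℤ) * ((d : ℤ) - 1) := by
    have hc := congrArg (fun n : ℕ => (n : ℤ)) (Finset.sum_range_id_mul_two d)
    push_cast [Nat.cast_sub (show 1 ≤ d by omega)] at hc
    have hspl := hsplit (fun i => (i : ℤ))
    rw [hSkdef, hSIdef, ← hspl]
    linarith [hc]
  -- h0 = SP + k
  have hh0val : h0 a = SP + k := by
    rw [hh0', hsplit]
    have h1 : ∑ i ∈ range k, (if 0 ≤ A i then A i + 1 else 0) = SP + k := by
      rw [hSPdef]
      rw [Finset.sum_congr rfl (fun i hi => if_pos (hk_min i (mem_range.mp hi)))]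
      rw [Finset.sum_add_distrib]
      simp
    have h2 : ∑ i ∈ Ico k d, (if 0 ≤ A i then A i + 1 else 0) = 0 := by
      apply Finset.sum_eq_zero
      intro i hi
      rw [mem_Ico] at hi
      have : A i < 0 := lt_of_le_of_lt (hAanti k i hi.1 hi.2) (by omega)
      rw [if_neg (by omega)]
    rw [h1, h2, add_zero]
  -- compute T
  have hcardIco : ((Ico k d).card : ℤ) = (d : ℤ) - k := by
    rw [Nat.card_Ico]; omega
  have hTval : T = ((k : ℤ) * ((k : ℤ) - 1) - Sk - SP)
      - (((k : ℤ) - 1) * ((d : ℤ) - k) - SI - SN) := by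
    rw [hTdef, hsplit]
    have h1 : ∑ i ∈ range k, (if i < k then (1 : ℤ) else -1) * ((k : ℤ) - 1 - i - A i)
        = (k : ℤ) * ((k : ℤ) - 1) - Sk - SP := by
      rw [Finset.sum_congr rfl (fun i hi => by
        rw [if_pos (mem_range.mp hi), one_mul])]
      rw [Finset.sum_sub_distrib, Finset.sum_sub_distrib, Finset.sum_const, card_range]
      rw [hSkdef, hSPdef]
      ring_nf
    have h2 : ∑ i ∈ Ico k d, (if i < k then (1 : ℤ) else -1) * ((k : ℤ) - 1 - i - A i)
        = -(((k : ℤ) - 1) * ((d : ℤ) - k) - SI - SN) := by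
      rw [Finset.sum_congr rfl (fun i hi => by
        rw [if_neg (by exact not_lt.mpr (mem_Ico.mp hi).1), neg_one_mul])]
      rw [Finset.sum_neg_distrib]
      congr 1
      rw [Finset.sum_sub_distrib, Finset.sum_sub_distrib, Finset.sum_const]
      rw [hSIdef, hSNdef, ← hcardIco]
      ring_nf
    rw [h1, h2]
    ring
  -- the key identity : 2T = -2(k-1)(d-k-2)
  have hkey : 2 * T = -2 * ((k : ℤ) - 1) * ((d : ℤ) - k - 2) := by
    rw [hh0val] at heq
    have heq2 : 2 * (SP + (k : ℤ)) * 2 = (2 + χ) * 2 + (d : ℤ) * ((d : ℤ) - 3) := by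
      linarith [hW2]
    linear_combination 2*hTval + 2*hsplitA - 2*hSk2 + hSd2 - heq2
  have hprod : 0 ≤ ((k : ℤ) - 1) * ((d : ℤ) - k - 2) := by
    apply mul_nonneg
    · omega
    · omega
  have hTzero : T = 0 := by linarith
  have hprodzero : ((k : ℤ) - 1) * ((d : ℤ) - k - 2) = 0 := by linarith
  -- every entry equals k - 1 - i
  have hall : ∀ i : Fin d, a i = (k : ℤ) - 1 - (i : ℕ) := by
    intro i
    have hz := (Finset.sum_eq_zero_iff_of_nonneg (fun i hi => by
      simp only [mem_range] at hi
      by_cases h : i < k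
      · rw [if_pos h]; have := hub i h; linarith
      · rw [if_neg h]; have := hlb i (by omega) hi; linarith)).mp hTzero
    have hi := hz (i : ℕ) (mem_range.mpr i.isLt)
    rw [← hAeq i]
    by_cases h : (i : ℕ) < k
    · rw [if_pos h, one_mul] at hi; linarith
    · rw [if_neg h, neg_one_mul, neg_eq_zero] at hi; linarith
  -- total sum gives χ
  have hχval : χ - d = (d : ℤ) * ((k : ℤ) - 1) - (Sk + SI) := by
    rw [← hsum']
    have : ∑ i ∈ range d, A i = ∑ i ∈ range d, ((k : ℤ) - 1 - (i : ℤ)) := by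
      apply Finset.sum_congr rfl
      intro i hi
      simp only [mem_range] at hi
      have := hall ⟨i, hi⟩
      rw [← hAeq ⟨i, hi⟩] at this
      simpa using this
    rw [this, Finset.sum_sub_distrib, Finset.sum_const, card_range]
    rw [hsplit (fun i => (i : ℤ)), ← hSkdef, ← hSIdef]
    ring_nf
  rcases mul_eq_zero.mp hprodzero with hcase | hcase
  · -- k = 1
    left
    have hkval : (k : ℤ) = 1 := by linarith
    constructor
    · have h2χ : 2 * χ = 2 * (1 - gd (d : ℤ)) := by
        linear_combination 2 * hχval - hSd2 + hgd2 + 2 * (d : ℤ) * hkval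
      linarith
    · intro i
      rw [hall i, hkval]
      ring
  · -- k = d - 2
    right
    have hkval : (k : ℤ) = (d : ℤ) - 2 := by linarith
    constructor
    · have h2χ : 2 * χ = 2 * (gd (d : ℤ) - 1) := by
        linear_combination 2 * hχval - hSd2 - hgd2 + 2 * (d : ℤ) * hkval
      linarith
    · intro i
      rw [hall i, hkval]
      ring
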